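/- Let G be a standard Gaussian random variable and f : ℝ → ℝ bounded measurable. Define u(x) := E[f(x e^{σ√T G - σ²T/2})] for x > 0 and σ, T > 0. Then u is differentiable in x and u'(x) = E[f(x e^{σ√T G - σ²T/2}) G/(x σ√T)]. -/

import Mathlib

open MeasureTheory ProbabilityTheory
open scoped ENNReal NNReal

lemma integral_gaussianReal_std (h : ℝ → ℝ) :
    ∫ g, h g ∂(gaussianReal 0 1) = ∫ g, gaussianPDFReal 0 1 g * h g := by
  rw [gaussianReal_of_var_ne_zero 0 one_ne_zero]
  have he : gaussianPDF 0 1 = fun x => ((gaussianPDFReal 0 1 x).toNNReal : ℝ≥0∞) := rfl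
  rw [he, integral_withDensity_eq_integral_smul (measurable_gaussianPDFReal 0 1).real_toNNReal h]
  congr 1
  funext g
  simp [NNReal.smul_def, Real.coe_toNNReal _ (gaussianPDFReal_nonneg 0 1 g)]

lemma transfer {Ω : Type*} [MeasurableSpace Ω] (μ : Measure Ω)
    (G : Ω → ℝ) (hG : Measurable G) (hlaw : Measure.map G μ = gaussianReal 0 1)
    (f w : ℝ → ℝ) (hf : Measurable f) (hw : Measurable w)
    (a b y : ℝ) (ha : a ≠ 0) (hy : 0 < y) :
    ∫ ω, f (y * Real.exp (a * G ω - b)) * w (G ω) ∂μ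
      = ∫ g, gaussianPDFReal 0 1 (g - Real.log y / a) *
          (f (Real.exp (a * g - b)) * w (g - Real.log y / a)) := by
  have hk : Measurable fun g : ℝ => f (y * Real.exp (a * g - b)) * w g :=
    (hf.comp (by fun_prop)).mul hw
  have h1 : ∫ ω, f (y * Real.exp (a * G ω - b)) * w (G ω) ∂μ
      = ∫ g, f (y * Real.exp (a * g - b)) * w g ∂(gaussianReal 0 1) := by
    rw [← hlaw, integral_map hG.aemeasurable hk.aestronglyMeasurable]
  rw [h1, integral_gaussianReal_std]
  rw [← integral_sub_right_eq_self
    (fun g => gaussianPDFReal 0 1 g * (f (y * Real.exp (a * g - b)) * w g)) (Real.log y / a)]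
  congr 1
  funext g
  have h2 : a * (g - Real.log y / a) - b = (a * g - b) - Real.log y := by
    field_simp; ring
  rw [h2, Real.exp_sub, Real.exp_log hy, mul_div_cancel₀ _ hy.ne']

lemma hasDerivAt_phi (a : ℝ) (ha : a ≠ 0) (g r : ℝ) {y : ℝ} (hy : 0 < y) :
    HasDerivAt (fun y : ℝ => gaussianPDFReal 0 1 (g - Real.log y / a) * r)
      ((g - Real.log y / a) / (a * y) * gaussianPDFReal 0 1 (g - Real.log y / a) * r) y := by
  have hphi : ∀ t, gaussianPDFReal 0 1 t = (Real.sqrt (2*Real.pi))⁻¹ * Real.exp (-(t^2)/2) :=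
    fun t => by simp [gaussianPDFReal]
  simp only [hphi]
  have h1 : HasDerivAt (fun y : ℝ => g - Real.log y / a) (-(y⁻¹ / a)) y :=
    ((Real.hasDerivAt_log hy.ne').div_const a).const_sub g
  have h2 : HasDerivAt (fun y : ℝ => -((g - Real.log y / a)^2)/2)
      (-((2:ℕ) * (g - Real.log y / a)^(2-1) * (-(y⁻¹ / a)))/2) y := ((h1.pow 2).neg).div_const 2
  have h3 := (h2.exp.const_mul ((Real.sqrt (2*Real.pi))⁻¹)).mul_const r
  convert h3 using 1
  have hs : Real.sqrt (2*Real.pi) ≠ 0 := by positivity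
  · rfl
  · rfl
  field_simp
  ring_nf
  field_simp

lemma gauss_bound (K c g : ℝ) (hc : |c| ≤ K) :
    gaussianPDFReal 0 1 (g - c)
      ≤ (Real.sqrt (2*Real.pi))⁻¹ * (Real.exp (K^2) * Real.exp (-(4:ℝ)⁻¹ * g^2)) := by
  have hphi : ∀ t, gaussianPDFReal 0 1 t = (Real.sqrt (2*Real.pi))⁻¹ * Real.exp (-(t^2)/2) :=
    fun t => by simp [gaussianPDFReal]
  rw [hphi, ← Real.exp_add]
  refine mul_le_mul_of_nonneg_left (Real.exp_le_exp.mpr ?_) (by positivity)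
  have h1 : c * g ≤ K * |g| := by
    calc c * g ≤ |c * g| := le_abs_self _
    _ = |c| * |g| := abs_mul _ _
    _ ≤ K * |g| := mul_le_mul_of_nonneg_right hc (abs_nonneg g)
  nlinarith [sq_nonneg (|g|/2 - K), sq_nonneg c, sq_abs g]

/-- Let `G` be a standard Gaussian and `f : ℝ → ℝ` bounded measurable.
For `σ, T > 0` define `u(x) := E[f(x e^{σ√T G - σ²T/2})]`.  Then `u` is differentiable
for `x > 0` with `u'(x) = E[f(x e^{σ√T G - σ²T/2}) · G/(x σ √T)]`. -/
theorem stmt_11 {Ω : Type*} [MeasurableSpace Ω] (μ : Measure Ω) [IsProbabilityMeasure μ]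
    (σ T : ℝ) (hσ : 0 < σ) (hT : 0 < T)
    (G : Ω → ℝ) (hG : Measurable G) (hlaw : Measure.map G μ = gaussianReal 0 1)
    (f : ℝ → ℝ) (hfmeas : Measurable f) (hfbdd : ∃ C : ℝ, ∀ y, |f y| ≤ C)
    (u : ℝ → ℝ)
    (hu : ∀ x, u x = ∫ ω, f (x * Real.exp (σ * Real.sqrt T * G ω - σ ^ 2 * T / 2)) ∂μ) :
    ∀ x : ℝ, 0 < x →
      HasDerivAt u
        (∫ ω, f (x * Real.exp (σ * Real.sqrt T * G ω - σ ^ 2 * T / 2)) *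
          (G ω / (x * σ * Real.sqrt T)) ∂μ) x := by
  intro x hx
  obtain ⟨C, hC⟩ := hfbdd
  have hC0 : 0 ≤ C := le_trans (abs_nonneg _) (hC 0)
  set a := σ * Real.sqrt T with ha_def
  have ha : 0 < a := mul_pos hσ (Real.sqrt_pos.mpr hT)
  set b := σ ^ 2 * T / 2 with hb_def
  -- abbreviations
  set K := (|Real.log (x/2)| + |Real.log (3*x/2)|) / a with hK_def
  have hK0 : 0 ≤ K := by
    apply div_nonneg _ ha.le
    positivity
  have hball : ∀ y ∈ Metric.ball x (x/2), x/2 < y ∧ |Real.log y / a| ≤ K := by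
    intro y hy
    rw [Metric.mem_ball, Real.dist_eq, abs_lt] at hy
    have hy1 : x/2 < y := by linarith [hy.1]
    refine ⟨hy1, ?_⟩
    have hlow : Real.log (x/2) ≤ Real.log y := Real.log_le_log (half_pos hx) hy1.le
    have hhigh : Real.log y ≤ Real.log (3*x/2) := by
      apply Real.log_le_log (lt_trans (half_pos hx) hy1)
      linarith [hy.2]
    have habs : |Real.log y| ≤ |Real.log (x/2)| + |Real.log (3*x/2)| := by
      rw [abs_le]
      constructor
      · have := neg_abs_le (Real.log (x/2)); linarith [abs_nonneg (Real.log (3*x/2))]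
      · have := le_abs_self (Real.log (3*x/2)); linarith [abs_nonneg (Real.log (x/2))]
    rw [abs_div, abs_of_pos ha, hK_def]
    gcongr
  have hmeasF0 : Measurable fun g : ℝ => f (Real.exp (a * g - b)) := hfmeas.comp (by fun_prop)
  have hmeasφ : ∀ c : ℝ, Measurable fun g : ℝ => gaussianPDFReal 0 1 (g - c) :=
    fun c => (measurable_gaussianPDFReal 0 1).comp (measurable_id.sub measurable_const)
  have hint : ∀ c : ℝ, Integrable fun g : ℝ =>
      gaussianPDFReal 0 1 (g - c) * f (Real.exp (a * g - b)) := by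
    intro c
    refine Integrable.mono' ((integrable_gaussianPDFReal c 1).const_mul C)
      (((hmeasφ c).mul hmeasF0).aestronglyMeasurable) (ae_of_all _ fun g => ?_)
    rw [Real.norm_eq_abs, abs_mul, abs_of_nonneg (gaussianPDFReal_nonneg _ _ _)]
    rw [gaussianPDFReal_sub, zero_add, mul_comm]
    exact mul_le_mul_of_nonneg_right (hC _) (gaussianPDFReal_nonneg _ _ _)
  set M := C * ((Real.sqrt (2*Real.pi))⁻¹ * Real.exp (K^2)) / (a * (x/2)) with hM_def
  have hE1 : Integrable fun g : ℝ => |g| * Real.exp (-(4:ℝ)⁻¹ * g^2) := by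
    have h := (integrable_mul_exp_neg_mul_sq (b := (4:ℝ)⁻¹) (by norm_num)).abs
    exact h.congr (ae_of_all _ fun g => by simp [abs_mul, abs_of_pos (Real.exp_pos _)])
  have hE2 : Integrable fun g : ℝ => Real.exp (-(4:ℝ)⁻¹ * g^2) :=
    integrable_exp_neg_mul_sq (by norm_num)
  have key := hasDerivAt_integral_of_dominated_loc_of_deriv_le (μ := (volume : Measure ℝ))
    (F := fun y g => gaussianPDFReal 0 1 (g - Real.log y / a) * f (Real.exp (a * g - b)))
    (F' := fun y g => (g - Real.log y / a) / (a * y) *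
      gaussianPDFReal 0 1 (g - Real.log y / a) * f (Real.exp (a * g - b)))
    (x₀ := x) (s := Metric.ball x (x/2))
    (bound := fun g => M * (|g| * Real.exp (-(4:ℝ)⁻¹ * g^2))
      + M * K * Real.exp (-(4:ℝ)⁻¹ * g^2))
    (Metric.ball_mem_nhds x (half_pos hx))
    (Filter.Eventually.of_forall fun y => ((hmeasφ _).mul hmeasF0).aestronglyMeasurable)
    (hint _)
    ((((measurable_id.sub measurable_const).div_const _).mul (hmeasφ _)).mul
      hmeasF0).aestronglyMeasurable
    ?_ (((hE1.const_mul M).add (hE2.const_mul (M*K)))) ?_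
  · -- assemble
    have h2 := transfer μ G hG hlaw f (fun t => t / (x * σ * Real.sqrt T)) hfmeas (by fun_prop)
      a b x ha.ne' hx
    rw [h2]
    have hrearr : (∫ g, gaussianPDFReal 0 1 (g - Real.log x / a) *
          (f (Real.exp (a * g - b)) * ((g - Real.log x / a) / (x * σ * Real.sqrt T))))
        = ∫ g, (g - Real.log x / a) / (a * x) *
          gaussianPDFReal 0 1 (g - Real.log x / a) * f (Real.exp (a * g - b)) := by
      congr 1
      funext g
      have : x * σ * Real.sqrt T = a * x := by rw [ha_def]; ring
      rw [this]
      ring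
    rw [hrearr]
    refine key.2.congr_of_eventuallyEq ?_
    filter_upwards [Ioi_mem_nhds hx] with y hy
    have hy0 : (0:ℝ) < y := hy
    have h1 := transfer μ G hG hlaw f (fun _ => 1) hfmeas measurable_const a b y ha.ne' hy0
    rw [hu y]
    simpa using h1
  · -- bound
    refine ae_of_all _ fun g y hy => ?_
    obtain ⟨hy1, hyK⟩ := hball y hy
    have hy0 : 0 < y := lt_trans (half_pos hx) hy1
    have p1 : |(g - Real.log y / a)/(a*y)| ≤ (|g| + K)/(a*(x/2)) := by
      rw [abs_div, abs_of_pos (mul_pos ha hy0)]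
      refine div_le_div₀ (by positivity) ?_ (by positivity) ?_
      · calc |g - Real.log y / a| ≤ |g| + |Real.log y / a| := abs_sub g (Real.log y / a)
          _ ≤ |g| + K := by linarith
      · exact mul_le_mul_of_nonneg_left hy1.le ha.le
    have p2 := gauss_bound K (Real.log y / a) g hyK
    have p3 := hC (Real.exp (a*g - b))
    rw [Real.norm_eq_abs, abs_mul, abs_mul, abs_of_nonneg (gaussianPDFReal_nonneg 0 1 _)]
    calc |(g - Real.log y / a)/(a*y)| * gaussianPDFReal 0 1 (g - Real.log y / a) *
          |f (Real.exp (a*g - b))|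
        ≤ ((|g| + K)/(a*(x/2))) *
            ((Real.sqrt (2*Real.pi))⁻¹ * (Real.exp (K^2) * Real.exp (-(4:ℝ)⁻¹ * g^2))) * C :=
          mul_le_mul (mul_le_mul p1 p2 (gaussianPDFReal_nonneg _ _ _) (by positivity)) p3
            (abs_nonneg _) (by positivity)
      _ = M * (|g| * Real.exp (-(4:ℝ)⁻¹ * g^2)) + M * K * Real.exp (-(4:ℝ)⁻¹ * g^2) := by
          rw [hM_def]; ring
  · -- differentiability
    refine ae_of_all _ fun g y hy => ?_
    exact hasDerivAt_phi a ha.ne' g _ (lt_trans (half_pos hx) (hball y hy).1)
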